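/- arXiv:1903.11680 — 2 statements merged into one kernel-verified Lean document; each statement's English description precedes it below -/
import Mathlib

section
/- In the setting of the preceding gradient-descent theorem (f: R^p → R^n differentiable with Jacobian J(θ); subspace S_+ with complement S_−; α ≤ ‖J(θ)ᵀv‖₂ ≤ β for unit v ∈ S_+ and J(θ)ᵀw = 0 for w ∈ S_− over the ball of radius 4‖r_0‖₂/α around θ_0; ‖J(θ_2) − J(θ_1)‖ ≤ L‖θ_2 − θ_1‖₂; f(θ_0) − ỹ ∈ S_+; step size η ≤ (1/(2β²))·min(1, αβ/(L‖r_0‖₂))), assume additionally that the corruption e = y − ỹ has at most s nonzero entries and that S_+ is γ-diffused, i.e. ‖v‖_∞ ≤ √(γ/n)·‖v‖₂ for every v ∈ S_+. Then after τ ≥ (5/(ηα²))·log(‖r_0‖₂/‖Π_{S_+}(e)‖_∞) iterations, the iterate satisfies ‖f(θ_τ) − ỹ‖_∞ ≤ 2‖Π_{S_+}(e)‖_∞ ≤ (2γ√s/n)·‖e‖₂. -/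
open MeasureTheory Metric
open scoped RealInnerProductSpace

set_option maxHeartbeats 1000000

noncomputable section

/-- Entrywise sup norm on Euclidean space. -/
def linfE {n : ℕ} (v : EuclideanSpace ℝ (Fin n)) : ℝ := ⨆ i, |v i|

lemma abs_coord_le {n : ℕ} (v : EuclideanSpace ℝ (Fin n)) (i : Fin n) : |v i| ≤ ‖v‖ := by
  rw [EuclideanSpace.norm_eq]
  have h1 : |v i| = Real.sqrt (‖v i‖ ^ 2) := by
    rw [Real.sqrt_sq_eq_abs]; simp [abs_abs]
  rw [h1]
  apply Real.sqrt_le_sqrt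
  exact Finset.single_le_sum (f := fun j => ‖v j‖ ^ 2) (fun j _ => by positivity) (Finset.mem_univ i)

lemma linfE_nonneg {n : ℕ} (v : EuclideanSpace ℝ (Fin n)) : 0 ≤ linfE v :=
  Real.iSup_nonneg fun _ => abs_nonneg _

lemma linfE_le_norm {n : ℕ} (v : EuclideanSpace ℝ (Fin n)) : linfE v ≤ ‖v‖ :=
  Real.iSup_le (fun i => abs_coord_le v i) (norm_nonneg v)

lemma le_linfE {n : ℕ} (v : EuclideanSpace ℝ (Fin n)) (i : Fin n) : |v i| ≤ linfE v :=
  le_ciSup (Set.Finite.bddAbove (Set.finite_range fun j => |v j|)) i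

lemma linfE_add_le {n : ℕ} (u v : EuclideanSpace ℝ (Fin n)) :
    linfE (u + v) ≤ linfE u + linfE v :=
  Real.iSup_le (fun i => by
    calc |(u + v) i| = |u i + v i| := by norm_num
    _ ≤ |u i| + |v i| := abs_add_le _ _
    _ ≤ _ := add_le_add (le_linfE u i) (le_linfE v i))
    (add_nonneg (linfE_nonneg u) (linfE_nonneg v))

/-- Mean value: differences of `f` lie in `Splus` when the adjoint Jacobian kills the
orthogonal complement on a convex set. -/
lemma mv_mem {p n : ℕ} {f : EuclideanSpace ℝ (Fin p) → EuclideanSpace ℝ (Fin n)}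
    {J : EuclideanSpace ℝ (Fin p) → (EuclideanSpace ℝ (Fin p) →L[ℝ] EuclideanSpace ℝ (Fin n))}
    (hJ : ∀ θ, HasFDerivAt f (J θ) θ)
    (Splus : Submodule ℝ (EuclideanSpace ℝ (Fin n)))
    {s : Set (EuclideanSpace ℝ (Fin p))} (hs : Convex ℝ s)
    (hnull : ∀ θ ∈ s, ∀ w ∈ Splusᗮ, (J θ).adjoint w = 0)
    {θ1 θ2 : EuclideanSpace ℝ (Fin p)} (h1 : θ1 ∈ s) (h2 : θ2 ∈ s) :
    f θ2 - f θ1 ∈ Splus := by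
  rw [← Submodule.orthogonal_orthogonal Splus]
  rw [Submodule.mem_orthogonal]
  intro w hw
  have key : ∀ x ∈ s, HasFDerivWithinAt (fun x => (inner ℝ w (f x) : ℝ))
      ((innerSL ℝ w).comp (J x)) s x := fun x _ =>
    ((innerSL ℝ w).hasFDerivAt.comp x (hJ x)).hasFDerivWithinAt
  have hzero : ∀ x ∈ s, ‖(innerSL ℝ w).comp (J x)‖ ≤ 0 := by
    intro x hx
    have : (innerSL ℝ w).comp (J x) = 0 := by
      ext v
      have h := (J x).adjoint_inner_left v w
      simp only [ContinuousLinearMap.coe_comp', Function.comp_apply, 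
        ContinuousLinearMap.zero_apply, innerSL_apply_apply]
      rw [← h, hnull x hx w hw, inner_zero_left]
    rw [this]; simp
  have hmv := hs.norm_image_sub_le_of_norm_hasFDerivWithin_le key hzero h1 h2
  have h0 : (inner ℝ w (f θ2) : ℝ) = inner ℝ w (f θ1) := by
    have h1' : ‖(inner ℝ w (f θ2) : ℝ) - inner ℝ w (f θ1)‖ ≤ 0 := by simpa using hmv
    have h2' := le_antisymm h1' (norm_nonneg _)
    rwa [norm_eq_zero, sub_eq_zero] at h2'
  rw [inner_sub_right, h0, sub_self]

/-- Taylor / smoothness bound coming from a Lipschitz Jacobian. -/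
lemma taylor_bd {p n : ℕ} {f : EuclideanSpace ℝ (Fin p) → EuclideanSpace ℝ (Fin n)}
    {J : EuclideanSpace ℝ (Fin p) → (EuclideanSpace ℝ (Fin p) →L[ℝ] EuclideanSpace ℝ (Fin n))}
    (hJ : ∀ θ, HasFDerivAt f (J θ) θ) {L : ℝ} (hL : 0 ≤ L)
    (hsmooth : ∀ θ1 θ2, ‖J θ2 - J θ1‖ ≤ L * ‖θ2 - θ1‖)
    (θ1 θ2 : EuclideanSpace ℝ (Fin p)) :
    ‖f θ2 - f θ1 - (J θ1) (θ2 - θ1)‖ ≤ L * ‖θ2 - θ1‖ * ‖θ2 - θ1‖ := by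
  have hc : Convex ℝ (closedBall θ1 ‖θ2 - θ1‖) := convex_closedBall _ _
  have h1 : θ1 ∈ closedBall θ1 ‖θ2 - θ1‖ := mem_closedBall_self (norm_nonneg _)
  have h2 : θ2 ∈ closedBall θ1 ‖θ2 - θ1‖ := by
    rw [mem_closedBall, dist_eq_norm]
  have key : ∀ x ∈ closedBall θ1 ‖θ2 - θ1‖,
      HasFDerivWithinAt f (J x) (closedBall θ1 ‖θ2 - θ1‖) x :=
    fun x _ => (hJ x).hasFDerivWithinAt
  have bd : ∀ x ∈ closedBall θ1 ‖θ2 - θ1‖, ‖J x - J θ1‖ ≤ L * ‖θ2 - θ1‖ := by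
    intro x hx
    refine (hsmooth θ1 x).trans ?_
    rw [mem_closedBall, dist_eq_norm] at hx
    exact mul_le_mul_of_nonneg_left hx hL
  have := hc.norm_image_sub_le_of_norm_hasFDerivWithin_le' key bd h1 h2
  linarith

/-- ℓ¹–ℓ² bound for `s`-sparse vectors. -/
lemma sum_abs_sparse {n : ℕ} (s : ℕ) (e : EuclideanSpace ℝ (Fin n))
    (hs : (Finset.univ.filter fun i => e i ≠ 0).card ≤ s) :
    ∑ i, |e i| ≤ Real.sqrt s * ‖e‖ := by
  set T := Finset.univ.filter fun i => e i ≠ 0 with hT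
  have hsum : ∑ i, |e i| = ∑ i ∈ T, |e i| := by
    refine (Finset.sum_subset (Finset.subset_univ T) ?_).symm
    intro i _ hi
    simp only [hT, Finset.mem_filter, Finset.mem_univ, true_and, not_not] at hi
    simp [hi]
  have hnorm2 : ‖e‖ ^ 2 = ∑ i, |e i| ^ 2 := by
    rw [EuclideanSpace.norm_eq, Real.sq_sqrt (by positivity)]
    simp [Real.norm_eq_abs]
  have hsq : (∑ i ∈ T, |e i|) ^ 2 ≤ (s : ℝ) * ‖e‖ ^ 2 := by
    have h1 : (∑ i ∈ T, |e i|) ^ 2 ≤ (T.card : ℝ) * ∑ i ∈ T, |e i| ^ 2 := by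
      exact_mod_cast sq_sum_le_card_mul_sum_sq (s := T) (f := fun i => |e i|)
    have h2 : ∑ i ∈ T, |e i| ^ 2 ≤ ∑ i, |e i| ^ 2 :=
      Finset.sum_le_sum_of_subset_of_nonneg (Finset.subset_univ T) (fun i _ _ => by positivity)
    have h3 : (T.card : ℝ) ≤ (s : ℝ) := by exact_mod_cast hs
    rw [hnorm2]
    calc (∑ i ∈ T, |e i|) ^ 2 ≤ (T.card : ℝ) * ∑ i ∈ T, |e i| ^ 2 := h1
    _ ≤ (s : ℝ) * ∑ i, |e i| ^ 2 := by
        apply mul_le_mul h3 h2 (by positivity) (by positivity)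
  rw [hsum]
  have h0 : 0 ≤ ∑ i ∈ T, |e i| := Finset.sum_nonneg fun i _ => abs_nonneg _
  calc ∑ i ∈ T, |e i| = Real.sqrt ((∑ i ∈ T, |e i|) ^ 2) := (Real.sqrt_sq h0).symm
  _ ≤ Real.sqrt ((s : ℝ) * ‖e‖ ^ 2) := Real.sqrt_le_sqrt hsq
  _ = Real.sqrt s * ‖e‖ := by
      rw [Real.sqrt_mul (by positivity), Real.sqrt_sq (norm_nonneg _)]

/-- Pure arithmetic of one gradient descent step. -/
lemma contraction_arith (α β L η N q B D : ℝ)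
    (hα : 0 < α) (hβ : α ≤ β) (hη : 0 < η) (hN : 0 < N) (hq0 : 0 ≤ q)
    (hql : α * N ≤ q) (hqu : q ≤ β * N)
    (hη2 : η * β ^ 2 ≤ 1 / 2) (hLηN : L * η * N ≤ 1 / 2) (hL : 0 ≤ L)
    (hB0 : 0 ≤ B) (hB2 : B ^ 2 ≤ N ^ 2 - 3 / 2 * η * q ^ 2)
    (hD : D ≤ L * (η * q) * (η * q)) :
    B + D ≤ N - 1 / 4 * (η * q ^ 2 / N) ∧
      η * q * α / 4 ≤ 1 / 4 * (η * q ^ 2 / N) ∧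
      η * α ^ 2 / 4 * N ≤ 1 / 4 * (η * q ^ 2 / N) := by
  have hq2N : η * q ^ 2 ≤ N ^ 2 / 2 := by
    have h1 : q * q ≤ (β * N) * (β * N) := mul_le_mul hqu hqu hq0 (le_trans hq0 hqu)
    have h2 : η * (q * q) ≤ η * ((β * N) * (β * N)) := mul_le_mul_of_nonneg_left h1 hη.le
    have h3 : η * ((β * N) * (β * N)) = (η * β ^ 2) * N ^ 2 := by ring
    have h4 : (η * β ^ 2) * N ^ 2 ≤ 1 / 2 * N ^ 2 :=
      mul_le_mul_of_nonneg_right hη2 (sq_nonneg N)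
    nlinarith [h2, h3, h4]
  have hBpos : 0 ≤ N - 3 / 4 * (η * q ^ 2 / N) := by
    have h5 : η * q ^ 2 / N ≤ N := by
      rw [div_le_iff₀ hN]; nlinarith [hq2N, hN]
    nlinarith [h5, div_nonneg (mul_nonneg hη.le (sq_nonneg q)) hN.le]
  have hBle : B ≤ N - 3 / 4 * (η * q ^ 2 / N) := by
    have h7 : B ^ 2 ≤ (N - 3 / 4 * (η * q ^ 2 / N)) ^ 2 := by
      have hexp : (N - 3 / 4 * (η * q ^ 2 / N)) ^ 2
          = N ^ 2 - 3 / 2 * η * q ^ 2 + (3 / 4 * (η * q ^ 2 / N)) ^ 2 := by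
        field_simp; ring
      nlinarith [hB2, sq_nonneg (3 / 4 * (η * q ^ 2 / N))]
    calc B = Real.sqrt (B ^ 2) := (Real.sqrt_sq hB0).symm
    _ ≤ Real.sqrt ((N - 3 / 4 * (η * q ^ 2 / N)) ^ 2) := Real.sqrt_le_sqrt h7
    _ = N - 3 / 4 * (η * q ^ 2 / N) := Real.sqrt_sq hBpos
  have hDle : D ≤ 1 / 2 * (η * q ^ 2 / N) := by
    refine hD.trans ?_
    have he : 1 / 2 * (η * q ^ 2 / N) = 1 / 2 * (η * q ^ 2) / N := by ring
    rw [he, le_div_iff₀ hN]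
    have h8 : L * (η * q) * (η * q) * N = (L * η * N) * (η * q ^ 2) := by ring
    have h9 : (L * η * N) * (η * q ^ 2) ≤ 1 / 2 * (η * q ^ 2) :=
      mul_le_mul_of_nonneg_right hLηN (mul_nonneg hη.le (sq_nonneg q))
    linarith [h8, h9]
  refine ⟨by linarith [hBle, hDle], ?_, ?_⟩
  · have h10 : η * q * α * N ≤ η * q * q := by
      nlinarith [mul_le_mul_of_nonneg_left hql (mul_nonneg hη.le hq0)]
    have h11 : η * q * α ≤ η * q ^ 2 / N := by
      rw [le_div_iff₀ hN]; nlinarith [h10]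
    linarith
  · have h12 : η * α ^ 2 * N * N ≤ η * q * q := by
      nlinarith [mul_le_mul hql hql (mul_nonneg hα.le hN.le) hq0, hη.le]
    have h13 : η * α ^ 2 * N ≤ η * q ^ 2 / N := by
      rw [le_div_iff₀ hN]; nlinarith [h12]
    linarith

/-- The main induction: linear decay of the shifted residual. -/
lemma descent_induction {p n : ℕ}
    {f : EuclideanSpace ℝ (Fin p) → EuclideanSpace ℝ (Fin n)}
    {J : EuclideanSpace ℝ (Fin p) → (EuclideanSpace ℝ (Fin p) →L[ℝ] EuclideanSpace ℝ (Fin n))}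
    (hJ : ∀ θ, HasFDerivAt f (J θ) θ)
    (y ytil a : EuclideanSpace ℝ (Fin n))
    (Splus : Submodule ℝ (EuclideanSpace ℝ (Fin n)))
    (θ0 : EuclideanSpace ℝ (Fin p)) (α β L η R : ℝ)
    (hα : 0 < α) (hβ : α ≤ β) (hL : 0 < L) (hη : 0 < η) (hR : 0 < R)
    (hlow : ∀ θ ∈ closedBall θ0 (4 * R / α),
      ∀ u : EuclideanSpace ℝ (Fin n), u ∈ Splus → ‖u‖ = 1 →
        α ≤ ‖(J θ).adjoint u‖ ∧ ‖(J θ).adjoint u‖ ≤ β)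
    (hnull : ∀ θ ∈ closedBall θ0 (4 * R / α),
      ∀ w : EuclideanSpace ℝ (Fin n), w ∈ Splusᗮ → ‖(J θ).adjoint w‖ = 0)
    (hsmooth : ∀ θ1 θ2 : EuclideanSpace ℝ (Fin p), ‖J θ2 - J θ1‖ ≤ L * ‖θ2 - θ1‖)
    (haS : a ∈ Splus) (heaO : (y - ytil) - a ∈ Splusᗮ)
    (hz0mem : f θ0 - ytil - a ∈ Splus)
    (hz0R : ‖f θ0 - ytil - a‖ ≤ R)
    (hη2 : η * β ^ 2 ≤ 1 / 2) (hηL : L * η * β * R ≤ α / 2)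
    (θseq : ℕ → EuclideanSpace ℝ (Fin p))
    (hθ0 : θseq 0 = θ0)
    (hstep : ∀ τ : ℕ, θseq (τ + 1) = θseq τ - η • (J (θseq τ)).adjoint (f (θseq τ) - y)) :
    ∀ τ : ℕ, ‖f (θseq τ) - ytil - a‖ ≤ (1 - η * α ^ 2 / 4) ^ τ * ‖f θ0 - ytil - a‖ := by
  have hβpos : 0 < β := lt_of_lt_of_le hα hβ
  set z : ℕ → EuclideanSpace ℝ (Fin n) := fun τ => f (θseq τ) - ytil - a with hz
  set c := η * α ^ 2 / 4 with hcdef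
  have hc0 : 0 < c := by rw [hcdef]; positivity
  have hc1 : c ≤ 1 / 8 := by
    rw [hcdef]
    linarith [hη2, mul_le_mul_of_nonneg_left (pow_le_pow_left₀ hα.le hβ 2) hη.le]
  have h1c0 : (0:ℝ) ≤ 1 - c := by linarith
  have h1c1 : (1:ℝ) - c ≤ 1 := by linarith
  have hz0mem' : z 0 ∈ Splus := by simp only [hz, hθ0]; exact hz0mem
  have hz0R' : ‖z 0‖ ≤ R := by simp only [hz, hθ0]; exact hz0R
  have hnullE : ∀ θ ∈ closedBall θ0 (4 * R / α), (J θ).adjoint ((y - ytil) - a) = 0 :=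
    fun θ hθ => norm_eq_zero.mp (hnull θ hθ _ heaO)
  have hresid : ∀ τ, f (θseq τ) - y = z τ - ((y - ytil) - a) := by
    intro τ; simp only [hz]; abel
  have hupdate : ∀ τ, θseq τ ∈ closedBall θ0 (4 * R / α) →
      θseq (τ + 1) = θseq τ - η • (J (θseq τ)).adjoint (z τ) := by
    intro τ hτ
    rw [hstep τ, hresid τ, map_sub, hnullE _ hτ, sub_zero]
  have hlo : ∀ θ ∈ closedBall θ0 (4 * R / α), ∀ u ∈ Splus,
      α * ‖u‖ ≤ ‖(J θ).adjoint u‖ := by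
    intro θ hθ u hu
    rcases eq_or_ne u 0 with rfl | hu0
    · simp
    · have hcn : 0 < ‖u‖ := norm_pos_iff.mpr hu0
      have h5 := (hlow θ hθ (‖u‖⁻¹ • u) (Splus.smul_mem _ hu)
        (by rw [norm_smul, norm_inv, norm_norm, inv_mul_cancel₀ hcn.ne'])).1
      rw [_root_.map_smul, norm_smul, norm_inv, norm_norm] at h5
      have h6 : ‖u‖ * ‖u‖⁻¹ = 1 := mul_inv_cancel₀ hcn.ne'
      have h7 := mul_le_mul_of_nonneg_left h5 hcn.le
      rw [← mul_assoc, h6, one_mul] at h7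
      linarith
  have hup : ∀ θ ∈ closedBall θ0 (4 * R / α), ∀ u ∈ Splus,
      ‖(J θ).adjoint u‖ ≤ β * ‖u‖ := by
    intro θ hθ u hu
    rcases eq_or_ne u 0 with rfl | hu0
    · simp
    · have hcn : 0 < ‖u‖ := norm_pos_iff.mpr hu0
      have h5 := (hlow θ hθ (‖u‖⁻¹ • u) (Splus.smul_mem _ hu)
        (by rw [norm_smul, norm_inv, norm_norm, inv_mul_cancel₀ hcn.ne'])).2
      rw [_root_.map_smul, norm_smul, norm_inv, norm_norm] at h5
      have h6 : ‖u‖ * ‖u‖⁻¹ = 1 := mul_inv_cancel₀ hcn.ne'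
      have h7 := mul_le_mul_of_nonneg_left h5 hcn.le
      rw [← mul_assoc, h6, one_mul] at h7
      linarith
  have hrange : ∀ θ ∈ closedBall θ0 (4 * R / α), ∀ v, J θ v ∈ Splus := by
    intro θ hθ v
    rw [← Submodule.orthogonal_orthogonal Splus, Submodule.mem_orthogonal]
    intro w hw
    rw [← (J θ).adjoint_inner_left v w, norm_eq_zero.mp (hnull θ hθ w hw), inner_zero_left]
  have hJnorm : ∀ θ ∈ closedBall θ0 (4 * R / α), ∀ v, ‖J θ v‖ ≤ β * ‖v‖ := by
    intro θ hθ v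
    have h1 : ⟪(J θ).adjoint (J θ v), v⟫ = ⟪J θ v, J θ v⟫ :=
      (J θ).adjoint_inner_left v (J θ v)
    have h2 : ‖(J θ).adjoint (J θ v)‖ ≤ β * ‖J θ v‖ := hup θ hθ _ (hrange θ hθ v)
    have h3 : ‖J θ v‖ ^ 2 ≤ β * ‖J θ v‖ * ‖v‖ := by
      calc ‖J θ v‖ ^ 2 = ⟪J θ v, J θ v⟫ := (real_inner_self_eq_norm_sq _).symm
      _ = ⟪(J θ).adjoint (J θ v), v⟫ := h1.symm
      _ ≤ ‖(J θ).adjoint (J θ v)‖ * ‖v‖ := real_inner_le_norm _ _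
      _ ≤ β * ‖J θ v‖ * ‖v‖ := by
          apply mul_le_mul_of_nonneg_right h2 (norm_nonneg _)
    rcases eq_or_lt_of_le (norm_nonneg (J θ v)) with h4 | h4
    · rw [← h4]; positivity
    · nlinarith [h3, h4]
  have main : ∀ τ, z τ ∈ Splus ∧ ‖θseq τ - θ0‖ ≤ 4 / α * (‖z 0‖ - ‖z τ‖) ∧
      ‖z τ‖ ≤ (1 - c) ^ τ * ‖z 0‖ := by
    intro τ
    induction τ with
    | zero =>
      refine ⟨hz0mem', ?_, ?_⟩
      · simp [hθ0]
      · simp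
    | succ τ ih =>
      obtain ⟨hm, hd, hg⟩ := ih
      have hpow1 : (1 - c) ^ τ ≤ 1 := pow_le_one₀ h1c0 h1c1
      have hNle : ‖z τ‖ ≤ ‖z 0‖ := by
        calc ‖z τ‖ ≤ (1 - c) ^ τ * ‖z 0‖ := hg
        _ ≤ 1 * ‖z 0‖ := mul_le_mul_of_nonneg_right hpow1 (norm_nonneg _)
        _ = ‖z 0‖ := one_mul _
      have hNR : ‖z τ‖ ≤ R := hNle.trans hz0R'
      have hθball : θseq τ ∈ closedBall θ0 (4 * R / α) := by
        rw [mem_closedBall, dist_eq_norm]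
        have h7 : 4 / α * (‖z 0‖ - ‖z τ‖) ≤ 4 * R / α := by
          have h7a : ‖z 0‖ - ‖z τ‖ ≤ R := by linarith [hz0R', norm_nonneg (z τ)]
          calc 4 / α * (‖z 0‖ - ‖z τ‖) ≤ 4 / α * R :=
              mul_le_mul_of_nonneg_left h7a (by positivity)
          _ = 4 * R / α := by ring
        linarith [hd]
      by_cases hzero : z τ = 0
      · have hq0 : (J (θseq τ)).adjoint (z τ) = 0 := by rw [hzero, map_zero]
        have hθeq : θseq (τ + 1) = θseq τ := by
          rw [hupdate τ hθball, hq0, smul_zero, sub_zero]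
        have hzeq : z (τ + 1) = z τ := by simp only [hz, hθeq]
        refine ⟨hzeq ▸ hm, ?_, ?_⟩
        · rw [hzeq, hθeq]; exact hd
        · rw [hzeq, hzero, norm_zero]
          exact mul_nonneg (pow_nonneg h1c0 _) (norm_nonneg _)
      · have hN0 : 0 < ‖z τ‖ := norm_pos_iff.mpr hzero
        have hql : α * ‖z τ‖ ≤ ‖(J (θseq τ)).adjoint (z τ)‖ := hlo _ hθball _ hm
        have hqu : ‖(J (θseq τ)).adjoint (z τ)‖ ≤ β * ‖z τ‖ := hup _ hθball _ hm
        have hstep' : θseq (τ + 1) = θseq τ - η • (J (θseq τ)).adjoint (z τ) :=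
          hupdate τ hθball
        have hdiff : θseq (τ + 1) - θseq τ = -(η • (J (θseq τ)).adjoint (z τ)) := by
          rw [hstep']; abel
        have hdn : ‖θseq (τ + 1) - θseq τ‖ = η * ‖(J (θseq τ)).adjoint (z τ)‖ := by
          rw [hdiff, norm_neg, norm_smul, Real.norm_eq_abs, abs_of_pos hη]
        have hθ'ball : θseq (τ + 1) ∈ closedBall θ0 (4 * R / α) := by
          rw [mem_closedBall, dist_eq_norm]
          have tri : ‖θseq (τ + 1) - θ0‖ ≤ ‖θseq (τ + 1) - θseq τ‖ + ‖θseq τ - θ0‖ := by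
            have := dist_triangle (θseq (τ + 1)) (θseq τ) θ0
            simpa [dist_eq_norm] using this
          rw [hdn] at tri
          have hηβ2 : η * β * (2 * α) ≤ 1 := by
            linarith [hη2, mul_nonneg (mul_nonneg hη.le hβpos.le) (sub_nonneg.mpr hβ)]
          have h8 : η * ‖(J (θseq τ)).adjoint (z τ)‖ ≤ ‖z τ‖ / (2 * α) := by
            rw [le_div_iff₀ (by positivity : (0:ℝ) < 2 * α)]
            have t1 : η * ‖(J (θseq τ)).adjoint (z τ)‖ * (2 * α)
                ≤ η * (β * ‖z τ‖) * (2 * α) := by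
              have := mul_le_mul_of_nonneg_right
                (mul_le_mul_of_nonneg_left hqu hη.le) (by positivity : (0:ℝ) ≤ 2 * α)
              linarith [this]
            have t2 : η * (β * ‖z τ‖) * (2 * α) = η * β * (2 * α) * ‖z τ‖ := by ring
            have t3 : η * β * (2 * α) * ‖z τ‖ ≤ 1 * ‖z τ‖ :=
              mul_le_mul_of_nonneg_right hηβ2 hN0.le
            linarith
          have h9 : 4 / α * (‖z 0‖ - ‖z τ‖) + ‖z τ‖ / (2 * α) ≤ 4 * R / α := by
            have e1 : 4 / α * (‖z 0‖ - ‖z τ‖) + ‖z τ‖ / (2 * α)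
                = (4 * (‖z 0‖ - ‖z τ‖) + ‖z τ‖ / 2) / α := by
              field_simp
            rw [e1]
            have hnum : 4 * (‖z 0‖ - ‖z τ‖) + ‖z τ‖ / 2 ≤ 4 * R := by
              linarith [hz0R', hN0.le]
            gcongr
          linarith [hd]
        have hmem' : z (τ + 1) ∈ Splus := by
          have hfs : f (θseq (τ + 1)) - f (θseq τ) ∈ Splus :=
            mv_mem hJ Splus (convex_closedBall _ _)
              (fun θ hθ w hw => norm_eq_zero.mp (hnull θ hθ w hw)) hθball hθ'ball
          have hrw : z (τ + 1) = z τ + (f (θseq (τ + 1)) - f (θseq τ)) := by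
            simp only [hz]; abel
          rw [hrw]; exact Splus.add_mem hm hfs
        have hΔ : ‖f (θseq (τ + 1)) - f (θseq τ) - (J (θseq τ)) (θseq (τ + 1) - θseq τ)‖
            ≤ L * (η * ‖(J (θseq τ)).adjoint (z τ)‖) * (η * ‖(J (θseq τ)).adjoint (z τ)‖) := by
          have := taylor_bd hJ hL.le hsmooth (θseq τ) (θseq (τ + 1))
          rw [hdn] at this
          exact this
        have hJd : (J (θseq τ)) (θseq (τ + 1) - θseq τ)
            = -(η • (J (θseq τ)) ((J (θseq τ)).adjoint (z τ))) := by
          rw [hdiff, map_neg, _root_.map_smul]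
        have hzsucc : z (τ + 1)
            = (z τ - η • (J (θseq τ)) ((J (θseq τ)).adjoint (z τ)))
              + (f (θseq (τ + 1)) - f (θseq τ) - (J (θseq τ)) (θseq (τ + 1) - θseq τ)) := by
          rw [hJd]
          simp only [hz]; abel
        have hJJ : ‖(J (θseq τ)) ((J (θseq τ)).adjoint (z τ))‖
            ≤ β * ‖(J (θseq τ)).adjoint (z τ)‖ := hJnorm _ hθball _
        have hip : ⟪z τ, η • (J (θseq τ)) ((J (θseq τ)).adjoint (z τ))⟫
            = η * ‖(J (θseq τ)).adjoint (z τ)‖ ^ 2 := by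
          rw [real_inner_smul_right, ← (J (θseq τ)).adjoint_inner_left,
            real_inner_self_eq_norm_sq]
        have hsm : ‖η • (J (θseq τ)) ((J (θseq τ)).adjoint (z τ))‖
            ≤ η * (β * ‖(J (θseq τ)).adjoint (z τ)‖) := by
          rw [norm_smul, Real.norm_eq_abs, abs_of_pos hη]
          exact mul_le_mul_of_nonneg_left hJJ hη.le
        have hB2 : ‖z τ - η • (J (θseq τ)) ((J (θseq τ)).adjoint (z τ))‖ ^ 2
            ≤ ‖z τ‖ ^ 2 - 3 / 2 * η * ‖(J (θseq τ)).adjoint (z τ)‖ ^ 2 := by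
          rw [norm_sub_sq_real, hip]
          have h6 : ‖η • (J (θseq τ)) ((J (θseq τ)).adjoint (z τ))‖ ^ 2
              ≤ (η * (β * ‖(J (θseq τ)).adjoint (z τ)‖)) ^ 2 :=
            pow_le_pow_left₀ (norm_nonneg _) hsm 2
          have h7 : (η * (β * ‖(J (θseq τ)).adjoint (z τ)‖)) ^ 2
              = (η * β ^ 2) * (η * ‖(J (θseq τ)).adjoint (z τ)‖ ^ 2) := by ring
          have h8 : (η * β ^ 2) * (η * ‖(J (θseq τ)).adjoint (z τ)‖ ^ 2)
              ≤ 1 / 2 * (η * ‖(J (θseq τ)).adjoint (z τ)‖ ^ 2) :=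
            mul_le_mul_of_nonneg_right hη2
              (mul_nonneg hη.le (sq_nonneg _))
          linarith [h6, h7.le, h7.ge, h8]
        have hLηN : L * η * ‖z τ‖ ≤ 1 / 2 := by
          have h9 : L * η * R * β ≤ α / 2 := by linarith [hηL]
          have h10 : L * η * R * β ≤ 1 / 2 * β := by linarith [h9, hβ]
          have hLηR : L * η * R ≤ 1 / 2 := le_of_mul_le_mul_right (by linarith [h10]) hβpos
          linarith [hLηR, mul_nonneg (mul_nonneg hL.le hη.le) (sub_nonneg.mpr hNR)]
        obtain ⟨hmain1, hmain2, hmain3⟩ := contraction_arith α β L η (‖z τ‖)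
          (‖(J (θseq τ)).adjoint (z τ)‖)
          (‖z τ - η • (J (θseq τ)) ((J (θseq τ)).adjoint (z τ))‖)
          (‖f (θseq (τ + 1)) - f (θseq τ) - (J (θseq τ)) (θseq (τ + 1) - θseq τ)‖)
          hα hβ hη hN0 (norm_nonneg _) hql hqu hη2 hLηN hL.le (norm_nonneg _) hB2 hΔ
        have hNstep : ‖z (τ + 1)‖
            ≤ ‖z τ‖ - 1 / 4 * (η * ‖(J (θseq τ)).adjoint (z τ)‖ ^ 2 / ‖z τ‖) := by
          calc ‖z (τ + 1)‖
              ≤ ‖z τ - η • (J (θseq τ)) ((J (θseq τ)).adjoint (z τ))‖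
                + ‖f (θseq (τ + 1)) - f (θseq τ) - (J (θseq τ)) (θseq (τ + 1) - θseq τ)‖ := by
                rw [hzsucc]; exact norm_add_le _ _
          _ ≤ _ := hmain1
        refine ⟨hmem', ?_, ?_⟩
        · have hgain : η * ‖(J (θseq τ)).adjoint (z τ)‖ * α / 4 ≤ ‖z τ‖ - ‖z (τ + 1)‖ := by
            linarith [hNstep, hmain2]
          have h12 : η * ‖(J (θseq τ)).adjoint (z τ)‖ ≤ 4 / α * (‖z τ‖ - ‖z (τ + 1)‖) := by
            have h13 : 4 / α * (η * ‖(J (θseq τ)).adjoint (z τ)‖ * α / 4)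
                = η * ‖(J (θseq τ)).adjoint (z τ)‖ := by field_simp
            calc η * ‖(J (θseq τ)).adjoint (z τ)‖
                = 4 / α * (η * ‖(J (θseq τ)).adjoint (z τ)‖ * α / 4) := h13.symm
            _ ≤ 4 / α * (‖z τ‖ - ‖z (τ + 1)‖) :=
                mul_le_mul_of_nonneg_left hgain (by positivity)
          have tri : ‖θseq (τ + 1) - θ0‖ ≤ ‖θseq (τ + 1) - θseq τ‖ + ‖θseq τ - θ0‖ := by
            have := dist_triangle (θseq (τ + 1)) (θseq τ) θ0
            simpa [dist_eq_norm] using this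
          rw [hdn] at tri
          have hdist : 4 / α * (‖z 0‖ - ‖z (τ + 1)‖)
              = 4 / α * (‖z 0‖ - ‖z τ‖) + 4 / α * (‖z τ‖ - ‖z (τ + 1)‖) := by ring
          rw [hdist]
          linarith [tri, hd, h12]
        · have h15 : ‖z (τ + 1)‖ ≤ (1 - c) * ‖z τ‖ := by
            have h16 : ‖z (τ + 1)‖ ≤ ‖z τ‖ - c * ‖z τ‖ := by
              have := hmain3
              rw [hcdef]
              linarith [hNstep, this]
            linarith [h16]
          calc ‖z (τ + 1)‖ ≤ (1 - c) * ‖z τ‖ := h15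
          _ ≤ (1 - c) * ((1 - c) ^ τ * ‖z 0‖) := mul_le_mul_of_nonneg_left hg h1c0
          _ = (1 - c) ^ (τ + 1) * ‖z 0‖ := by ring
  intro τ
  have := (main τ).2.2
  simpa only [hz, hθ0, hcdef] using this

/-- Meta-theorem, sparse corruption on a γ-diffused signal subspace. -/
theorem gradient_descent_sparse_corruption_diffused
    {p n : ℕ} (s : ℕ) (γ : ℝ)
    (f : EuclideanSpace ℝ (Fin p) → EuclideanSpace ℝ (Fin n))
    (J : EuclideanSpace ℝ (Fin p) → (EuclideanSpace ℝ (Fin p) →L[ℝ] EuclideanSpace ℝ (Fin n)))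
    (hJ : ∀ θ, HasFDerivAt f (J θ) θ)
    (y ytil : EuclideanSpace ℝ (Fin n))
    (Splus : Submodule ℝ (EuclideanSpace ℝ (Fin n)))
    (θ0 : EuclideanSpace ℝ (Fin p)) (α β L η : ℝ)
    (hα : 0 < α) (hβ : α ≤ β) (hL : 0 < L)
    (hlow : ∀ θ ∈ closedBall θ0 (4 * ‖f θ0 - y‖ / α),
      ∀ u : EuclideanSpace ℝ (Fin n), u ∈ Splus → ‖u‖ = 1 →
        α ≤ ‖(J θ).adjoint u‖ ∧ ‖(J θ).adjoint u‖ ≤ β)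
    (hnull : ∀ θ ∈ closedBall θ0 (4 * ‖f θ0 - y‖ / α),
      ∀ w : EuclideanSpace ℝ (Fin n), w ∈ Splusᗮ → ‖(J θ).adjoint w‖ = 0)
    (hsmooth : ∀ θ1 θ2 : EuclideanSpace ℝ (Fin p), ‖J θ2 - J θ1‖ ≤ L * ‖θ2 - θ1‖)
    (hinit : f θ0 - ytil ∈ Splus)
    (hη : 0 < η) (hηle : η ≤ 1 / (2 * β ^ 2) * min 1 (α * β / (L * ‖f θ0 - y‖)))
    (θseq : ℕ → EuclideanSpace ℝ (Fin p))
    (hθ0 : θseq 0 = θ0)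
    (hstep : ∀ τ : ℕ, θseq (τ + 1) = θseq τ - η • (J (θseq τ)).adjoint (f (θseq τ) - y))
    -- the corruption e = y − ỹ has at most s nonzero entries
    (hsparse : (Finset.univ.filter fun i : Fin n => (y - ytil) i ≠ 0).card ≤ s)
    -- S₊ is γ-diffused
    (hdiffuse : ∀ u : EuclideanSpace ℝ (Fin n), u ∈ Splus →
      linfE u ≤ Real.sqrt (γ / n) * ‖u‖)
    (hproj : 0 < linfE (Splus.orthogonalProjection (y - ytil) : EuclideanSpace ℝ (Fin n))) :
    ∀ τ : ℕ,
      5 / (η * α ^ 2) *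
          Real.log (‖f θ0 - y‖ /
            linfE (Splus.orthogonalProjection (y - ytil) : EuclideanSpace ℝ (Fin n))) ≤ (τ : ℝ) →
      linfE (f (θseq τ) - ytil) ≤
          2 * linfE (Splus.orthogonalProjection (y - ytil) : EuclideanSpace ℝ (Fin n)) ∧
        2 * linfE (Splus.orthogonalProjection (y - ytil) : EuclideanSpace ℝ (Fin n)) ≤
          2 * γ * Real.sqrt s / n * ‖y - ytil‖ := by
  classical
  have hβpos : 0 < β := lt_of_lt_of_le hα hβ
  set R := ‖f θ0 - y‖ with hRdef
  have hR : 0 < R := by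
    rcases (norm_nonneg (f θ0 - y)).lt_or_eq with h | h
    · exact h
    · exfalso
      rw [hRdef, ← h] at hηle
      norm_num at hηle
      linarith
  set e := y - ytil with he
  set a : EuclideanSpace ℝ (Fin n) :=
    (Splus.orthogonalProjection e : EuclideanSpace ℝ (Fin n)) with ha
  set A := linfE a with hAdef
  have hA0 : 0 < A := hproj
  have haS : a ∈ Splus := SetLike.coe_mem _
  have heaO : e - a ∈ Splusᗮ := Splus.sub_starProjection_mem_orthogonal e
  have hz0mem : f θ0 - ytil - a ∈ Splus := Splus.sub_mem hinit haS
  have hz0R : ‖f θ0 - ytil - a‖ ≤ R := by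
    have hdecomp : f θ0 - y = (f θ0 - ytil - a) - (e - a) := by
      simp only [he]; abel
    have horth : ⟪f θ0 - ytil - a, e - a⟫ = 0 :=
      Submodule.inner_right_of_mem_orthogonal hz0mem heaO
    have hsq : R ^ 2 = ‖f θ0 - ytil - a‖ ^ 2 + ‖e - a‖ ^ 2 := by
      rw [hRdef, hdecomp, norm_sub_sq_real, horth]; ring
    nlinarith [norm_nonneg (f θ0 - ytil - a), norm_nonneg (e - a), hR]
  -- step size facts
  have hη2 : η * β ^ 2 ≤ 1 / 2 := by
    have h1 : min 1 (α * β / (L * R)) ≤ 1 := min_le_left _ _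
    have h2 : η ≤ 1 / (2 * β ^ 2) := by
      calc η ≤ 1 / (2 * β ^ 2) * min 1 (α * β / (L * R)) := hηle
      _ ≤ 1 / (2 * β ^ 2) * 1 := by
          apply mul_le_mul_of_nonneg_left h1 (by positivity)
      _ = 1 / (2 * β ^ 2) := mul_one _
    rw [le_div_iff₀ (by positivity : (0:ℝ) < 2 * β ^ 2)] at h2
    nlinarith
  have hηL : L * η * β * R ≤ α / 2 := by
    have h2 : min 1 (α * β / (L * R)) ≤ α * β / (L * R) := min_le_right _ _
    have h3 : η ≤ α / (2 * β * L * R) := by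
      have h4 : (1 : ℝ) / (2 * β ^ 2) * (α * β / (L * R)) = α / (2 * β * L * R) := by
        field_simp
      calc η ≤ 1 / (2 * β ^ 2) * min 1 (α * β / (L * R)) := hηle
      _ ≤ 1 / (2 * β ^ 2) * (α * β / (L * R)) := by
          apply mul_le_mul_of_nonneg_left h2 (by positivity)
      _ = α / (2 * β * L * R) := h4
    rw [le_div_iff₀ (by positivity : (0:ℝ) < 2 * β * L * R)] at h3
    linarith
  set c := η * α ^ 2 / 4 with hcdef
  have hc0 : 0 < c := by rw [hcdef]; positivity
  have hc1 : c ≤ 1 / 8 := by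
    rw [hcdef]
    linarith [hη2, mul_le_mul_of_nonneg_left (pow_le_pow_left₀ hα.le hβ 2) hη.le]
  have h1c0 : (0:ℝ) ≤ 1 - c := by linarith
  have h1c1 : (1:ℝ) - c ≤ 1 := by linarith
  have main := descent_induction hJ y ytil a Splus θ0 α β L η R hα hβ hL hη hR
    hlow hnull hsmooth haS heaO hz0mem hz0R hη2 hηL θseq hθ0 hstep
  intro τ hτ
  have hgτ : ‖f (θseq τ) - ytil - a‖ ≤ (1 - c) ^ τ * ‖f θ0 - ytil - a‖ := by
    have := main τ
    rw [hcdef]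
    exact this
  have hbound : ‖f (θseq τ) - ytil - a‖ ≤ A := by
    rcases le_or_gt R A with hRA | hAR
    · calc ‖f (θseq τ) - ytil - a‖ ≤ (1 - c) ^ τ * ‖f θ0 - ytil - a‖ := hgτ
      _ ≤ 1 * ‖f θ0 - ytil - a‖ :=
          mul_le_mul_of_nonneg_right (pow_le_one₀ h1c0 h1c1) (norm_nonneg _)
      _ = ‖f θ0 - ytil - a‖ := one_mul _
      _ ≤ R := hz0R
      _ ≤ A := hRA
    · have hlog : 0 < Real.log (R / A) := Real.log_pos (by rw [lt_div_iff₀ hA0]; linarith)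
      have hcτ : Real.log (R / A) ≤ c * τ := by
        have h16 := mul_le_mul_of_nonneg_left hτ hc0.le
        have h17 : c * (5 / (η * α ^ 2) * Real.log (R / A)) = 5 / 4 * Real.log (R / A) := by
          rw [hcdef]; field_simp
        rw [h17] at h16
        linarith [hlog, h16]
      have hexp : (1 - c) ^ τ ≤ A / R := by
        have h13 : 1 - c ≤ Real.exp (-c) := by
          have := Real.add_one_le_exp (-c); linarith
        have h14 : (1 - c) ^ τ ≤ Real.exp (-c) ^ τ := pow_le_pow_left₀ h1c0 h13 τ
        have h15 : Real.exp (-c) ^ τ = Real.exp (-(c * τ)) := by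
          rw [← Real.exp_nat_mul]; congr 1; ring
        have h16 : Real.exp (-(c * τ)) ≤ Real.exp (-Real.log (R / A)) :=
          Real.exp_le_exp.mpr (by linarith [hcτ])
        have h17 : Real.exp (-Real.log (R / A)) = A / R := by
          rw [Real.exp_neg, Real.exp_log (by positivity), inv_div]
        calc (1 - c) ^ τ ≤ Real.exp (-c) ^ τ := h14
        _ = Real.exp (-(c * τ)) := h15
        _ ≤ Real.exp (-Real.log (R / A)) := h16
        _ = A / R := h17
      calc ‖f (θseq τ) - ytil - a‖ ≤ (1 - c) ^ τ * ‖f θ0 - ytil - a‖ := hgτ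
      _ ≤ A / R * R := mul_le_mul hexp hz0R (norm_nonneg _) (by positivity)
      _ = A := by field_simp
  constructor
  · have hsplit : f (θseq τ) - ytil = (f (θseq τ) - ytil - a) + a := by abel
    rw [hsplit]
    calc linfE ((f (θseq τ) - ytil - a) + a)
        ≤ linfE (f (θseq τ) - ytil - a) + linfE a := linfE_add_le _ _
    _ ≤ ‖f (θseq τ) - ytil - a‖ + A := add_le_add (linfE_le_norm _) (le_of_eq hAdef.symm)
    _ ≤ A + A := by linarith [hbound]
    _ = 2 * A := by ring
  · -- sparse corruption bound
    have hsumE : ∑ i, |e i| ≤ Real.sqrt s * ‖e‖ := sum_abs_sparse s e hsparse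
    have hinner1 : ⟪a, e⟫ = ‖a‖ ^ 2 := by
      have h18 : ⟪a, e - a⟫ = 0 := Submodule.inner_right_of_mem_orthogonal haS heaO
      rw [inner_sub_right] at h18
      have h19 : ⟪a, e⟫ = ⟪a, a⟫ := by linarith [h18]
      rw [h19, real_inner_self_eq_norm_sq]
    have hinner2 : ⟪a, e⟫ ≤ A * (Real.sqrt s * ‖e‖) := by
      calc ⟪a, e⟫ = ∑ i, a i * e i := by
            rw [PiLp.inner_apply]
            apply Finset.sum_congr rfl
            intro i _
            simp [RCLike.inner_apply, conj_trivial, mul_comm]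
      _ ≤ ∑ i, |a i| * |e i| := Finset.sum_le_sum fun i _ => by
            rw [← abs_mul]; exact le_abs_self _
      _ ≤ ∑ i, A * |e i| := Finset.sum_le_sum fun i _ =>
            mul_le_mul_of_nonneg_right (le_linfE a i) (abs_nonneg _)
      _ = A * ∑ i, |e i| := by rw [Finset.mul_sum]
      _ ≤ A * (Real.sqrt s * ‖e‖) := mul_le_mul_of_nonneg_left hsumE hA0.le
    have hAsqrt : A ≤ Real.sqrt (γ / n) * ‖a‖ := hdiffuse a haS
    have hγn : 0 ≤ γ / (n : ℝ) := by
      by_contra h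
      push_neg at h
      rw [Real.sqrt_eq_zero_of_nonpos h.le, zero_mul] at hAsqrt
      linarith [hA0]
    have hanorm : ‖a‖ ≤ Real.sqrt (γ / n) * (Real.sqrt s * ‖e‖) := by
      rcases eq_or_lt_of_le (norm_nonneg a) with h | h
      · rw [← h]; positivity
      · have h19 : ‖a‖ ^ 2 ≤ Real.sqrt (γ / n) * ‖a‖ * (Real.sqrt s * ‖e‖) := by
          calc ‖a‖ ^ 2 = ⟪a, e⟫ := hinner1.symm
          _ ≤ A * (Real.sqrt s * ‖e‖) := hinner2
          _ ≤ Real.sqrt (γ / n) * ‖a‖ * (Real.sqrt s * ‖e‖) :=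
              mul_le_mul_of_nonneg_right hAsqrt (by positivity)
        nlinarith [h19, h]
    have hfinal : A ≤ γ / n * (Real.sqrt s * ‖e‖) := by
      calc A ≤ Real.sqrt (γ / n) * ‖a‖ := hAsqrt
      _ ≤ Real.sqrt (γ / n) * (Real.sqrt (γ / n) * (Real.sqrt s * ‖e‖)) :=
          mul_le_mul_of_nonneg_left hanorm (Real.sqrt_nonneg _)
      _ = Real.sqrt (γ / n) * Real.sqrt (γ / n) * (Real.sqrt s * ‖e‖) := by ring
      _ = γ / n * (Real.sqrt s * ‖e‖) := by rw [Real.mul_self_sqrt hγn]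
    have hgoal : 2 * γ * Real.sqrt s / n * ‖e‖ = 2 * (γ / n * (Real.sqrt s * ‖e‖)) := by
      ring
    rw [hgoal]
    linarith [hfinal]
end
end

section
/- Let x_1, x_2 ∈ R^d be unit Euclidean norm vectors, let φ satisfy |φ'(z)| ≤ Γ and |φ''(z)| ≤ Γ for all z, let v ∈ R^k have entries ±1/√k, and suppose k ≥ c·d. Let W_0 ∈ R^{k×d} satisfy ‖W_0‖ ≤ 2(√k + √d), and let W ∈ R^{k×d} satisfy ‖W − W_0‖_F ≤ c̃·√k. Then there is a constant C (depending only on c, c̃) such that |(f(W, x_2) − f(W_0, x_2)) − (f(W, x_1) − f(W_0, x_1))| ≤ C·Γ·‖x_2 − x_1‖₂·‖W − W_0‖, where ‖W − W_0‖ is the spectral norm. -/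
open MeasureTheory ProbabilityTheory Real
open scoped BigOperators ENNReal Classical

noncomputable section

def l2 {ι : Type*} [Fintype ι] (v : ι → ℝ) : ℝ := Real.sqrt (∑ i, v i ^ 2)

def linf {ι : Type*} [Fintype ι] (v : ι → ℝ) : ℝ := ⨆ i, |v i|

def frob {ι κ : Type*} [Fintype ι] [Fintype κ] (M : ι → κ → ℝ) : ℝ :=
  Real.sqrt (∑ i, ∑ j, M i j ^ 2)

def spec {ι κ : Type*} [Fintype ι] [Fintype κ] (M : ι → κ → ℝ) : ℝ :=
  sSup {r | ∃ v : κ → ℝ, l2 v ≤ 1 ∧ r = l2 fun i => ∑ j, M i j * v j}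

def nnet {k d : ℕ} (φ : ℝ → ℝ) (v : Fin k → ℝ) (W : Fin k → Fin d → ℝ) (x : Fin d → ℝ) : ℝ :=
  ∑ ℓ, v ℓ * φ (∑ j, W ℓ j * x j)

def halfHalf {k : ℕ} (v : Fin k → ℝ) : Prop :=
  (∀ ℓ, v ℓ = 1 / Real.sqrt k ∨ v ℓ = -(1 / Real.sqrt k)) ∧
    2 * (Finset.univ.filter fun ℓ => v ℓ = 1 / Real.sqrt k).card = k

def gaussW (k d : ℕ) : Measure (Fin k → Fin d → ℝ) :=
  Measure.pi fun _ => Measure.pi fun _ => gaussianReal 0 1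

def gaussVec (d : ℕ) : Measure (Fin d → ℝ) := Measure.pi fun _ => gaussianReal 0 1

def nnCov {K d : ℕ} (φ : ℝ → ℝ) (C : Fin K → Fin d → ℝ) : Fin K → Fin K → ℝ := fun a b =>
  (∑ t, C a t * C b t) *
    ∫ g, deriv φ (∑ t, C a t * g t) * deriv φ (∑ t, C b t * g t) ∂ gaussVec d

def lamMin {K d : ℕ} (φ : ℝ → ℝ) (C : Fin K → Fin d → ℝ) : ℝ :=
  sInf {r | ∃ u : Fin K → ℝ, l2 u = 1 ∧ r = ∑ a, ∑ b, u a * nnCov φ C a b * u b}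

structure Clusterable (n K Kbar d : ℕ) (ε0 δ clow cup : ℝ)
    (x : Fin n → Fin d → ℝ) (c : Fin K → Fin d → ℝ)
    (assign : Fin n → Fin K) (α : Fin Kbar → ℝ) (cls : Fin K → Fin Kbar) : Prop where
  center_norm : ∀ ℓ, l2 (c ℓ) = 1
  x_norm : ∀ i, l2 (x i) = 1
  x_close : ∀ i, l2 (fun j => x i j - c (assign i) j) ≤ ε0
  bal_low : ∀ ℓ : Fin K, clow * n / K ≤ ((Finset.univ.filter fun i => assign i = ℓ).card : ℝ)
  bal_up : ∀ ℓ : Fin K, ((Finset.univ.filter fun i => assign i = ℓ).card : ℝ) ≤ cup * n / K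
  KbarleK : Kbar ≤ K
  α_mem : ∀ r, α r ∈ Set.Icc (-1 : ℝ) 1
  α_sep : ∀ r s, r ≠ s → δ ≤ |α r - α s|
  c_sep : ∀ ℓ ℓ', cls ℓ ≠ cls ℓ' → 2 * ε0 ≤ l2 (fun j => c ℓ j - c ℓ' j)

structure Corrupted (n K Kbar : ℕ) (ρ : ℝ) (assign : Fin n → Fin K)
    (α : Fin Kbar → ℝ) (cls : Fin K → Fin Kbar) (y : Fin n → ℝ) : Prop where
  inRange : ∀ i, ∃ r, y i = α r
  fewErrors : ∀ ℓ : Fin K,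
    ((Finset.univ.filter fun i => assign i = ℓ ∧ y i ≠ α (cls ℓ)).card : ℝ) ≤
      ρ * ((Finset.univ.filter fun i => assign i = ℓ).card : ℝ)

def gradL {n k d : ℕ} (φ : ℝ → ℝ) (v : Fin k → ℝ) (x : Fin n → Fin d → ℝ) (y : Fin n → ℝ)
    (W : Fin k → Fin d → ℝ) : Fin k → Fin d → ℝ := fun ℓ j =>
  ∑ i, (nnet φ v W (x i) - y i) * v ℓ * deriv φ (∑ t, W ℓ t * x i t) * x i j

def gdIter {n k d : ℕ} (η : ℝ) (φ : ℝ → ℝ) (v : Fin k → ℝ) (x : Fin n → Fin d → ℝ)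
    (y : Fin n → ℝ) (W0 : Fin k → Fin d → ℝ) : ℕ → Fin k → Fin d → ℝ
  | 0 => W0
  | τ + 1 => gdIter η φ v x y W0 τ - η • gradL φ v x y (gdIter η φ v x y W0 τ)


lemma l2_nonneg {ι : Type*} [Fintype ι] (v : ι → ℝ) : 0 ≤ l2 v := Real.sqrt_nonneg _

lemma l2_sq {ι : Type*} [Fintype ι] (v : ι → ℝ) : (l2 v) ^ 2 = ∑ i, v i ^ 2 :=
  Real.sq_sqrt (Finset.sum_nonneg fun i _ => sq_nonneg _)

lemma l2_cauchy {ι : Type*} [Fintype ι] (a b : ι → ℝ) :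
    ∑ i, |a i| * |b i| ≤ l2 a * l2 b := by
  have h := Finset.sum_mul_sq_le_sq_mul_sq Finset.univ (fun i => |a i|) (fun i => |b i|)
  simp only [sq_abs] at h
  have hn : 0 ≤ ∑ i, |a i| * |b i| :=
    Finset.sum_nonneg fun i _ => mul_nonneg (abs_nonneg _) (abs_nonneg _)
  have := Real.sqrt_le_sqrt h
  rwa [Real.sqrt_sq hn, Real.sqrt_mul (Finset.sum_nonneg fun i _ => sq_nonneg _)] at this

lemma l2_zero_iff {ι : Type*} [Fintype ι] (v : ι → ℝ) (h : l2 v = 0) : ∀ i, v i = 0 := by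
  intro i
  have hs : ∑ j, v j ^ 2 = 0 := by
    have := congrArg (fun t => t ^ 2) h
    simpa [l2_sq] using this
  have := (Finset.sum_eq_zero_iff_of_nonneg (fun j _ => sq_nonneg (v j))).mp hs i (Finset.mem_univ i)
  exact pow_eq_zero_iff two_ne_zero |>.mp this

lemma l2_smul {ι : Type*} [Fintype ι] (c : ℝ) (v : ι → ℝ) :
    l2 (fun i => c * v i) = |c| * l2 v := by
  unfold l2
  rw [← Real.sqrt_sq_eq_abs, ← Real.sqrt_mul (sq_nonneg c)]
  congr 1
  rw [Finset.mul_sum]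
  exact Finset.sum_congr rfl fun i _ => by ring

lemma mulvec_le_frob {ι κ : Type*} [Fintype ι] [Fintype κ] (M : ι → κ → ℝ) (u : κ → ℝ)
    (hu : l2 u ≤ 1) : l2 (fun i => ∑ j, M i j * u j) ≤ frob M := by
  unfold l2 frob
  apply Real.sqrt_le_sqrt
  apply Finset.sum_le_sum
  intro i _
  calc (∑ j, M i j * u j) ^ 2 ≤ (∑ j, M i j ^ 2) * ∑ j, u j ^ 2 :=
        Finset.sum_mul_sq_le_sq_mul_sq _ _ _
    _ ≤ (∑ j, M i j ^ 2) * 1 := by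
        apply mul_le_mul_of_nonneg_left _ (Finset.sum_nonneg fun j _ => sq_nonneg _)
        rw [← l2_sq]
        nlinarith [l2_nonneg u]
    _ = ∑ j, M i j ^ 2 := mul_one _

lemma spec_bddAbove {ι κ : Type*} [Fintype ι] [Fintype κ] (M : ι → κ → ℝ) :
    BddAbove {r | ∃ v : κ → ℝ, l2 v ≤ 1 ∧ r = l2 fun i => ∑ j, M i j * v j} := by
  refine ⟨frob M, ?_⟩
  rintro r ⟨u, hu, rfl⟩
  exact mulvec_le_frob M u hu

lemma spec_nonneg {ι κ : Type*} [Fintype ι] [Fintype κ] (M : ι → κ → ℝ) : 0 ≤ spec M := by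
  apply le_csSup (spec_bddAbove M)
  refine ⟨fun _ => 0, ?_, ?_⟩
  · simp [l2]
  · simp [l2]

lemma spec_le_frob {ι κ : Type*} [Fintype ι] [Fintype κ] (M : ι → κ → ℝ) :
    spec M ≤ frob M := by
  apply csSup_le
  · exact ⟨0, fun _ => 0, by simp [l2], by simp [l2]⟩
  · rintro r ⟨u, hu, rfl⟩
    exact mulvec_le_frob M u hu

lemma l2_mulvec_le_spec {ι κ : Type*} [Fintype ι] [Fintype κ] (M : ι → κ → ℝ) (u : κ → ℝ) :
    l2 (fun i => ∑ j, M i j * u j) ≤ spec M * l2 u := by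
  rcases eq_or_lt_of_le (l2_nonneg u) with h0 | h0
  · have hz := l2_zero_iff u h0.symm
    have : (fun i => ∑ j, M i j * u j) = fun _ : ι => (0:ℝ) := by
      funext i; simp [hz]
    rw [this, ← h0]
    simp [l2]
  · set t := l2 u with ht
    have key : l2 (fun i => ∑ j, M i j * (t⁻¹ * u j)) ≤ spec M := by
      apply le_csSup (spec_bddAbove M)
      refine ⟨fun j => t⁻¹ * u j, ?_, rfl⟩
      rw [l2_smul, abs_of_pos (inv_pos.mpr h0), ← ht, inv_mul_cancel₀ (ne_of_gt h0)]
    have h2 : l2 (fun i => ∑ j, M i j * (t⁻¹ * u j)) = t⁻¹ * l2 (fun i => ∑ j, M i j * u j) := by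
      have : (fun i => ∑ j, M i j * (t⁻¹ * u j)) = fun i => t⁻¹ * ∑ j, M i j * u j := by
        funext i; rw [Finset.mul_sum]; exact Finset.sum_congr rfl fun j _ => by ring
      rw [this, l2_smul, abs_of_pos (inv_pos.mpr h0)]
    rw [h2] at key
    calc l2 (fun i => ∑ j, M i j * u j) = t * (t⁻¹ * l2 (fun i => ∑ j, M i j * u j)) := by
          field_simp
      _ ≤ t * spec M := mul_le_mul_of_nonneg_left key (le_of_lt h0)
      _ = spec M * t := mul_comm _ _

lemma deriv_lip (φ : ℝ → ℝ) (hφ : ContDiff ℝ 2 φ) (Γ : ℝ)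
    (hd2 : ∀ z, |deriv (deriv φ) z| ≤ Γ) (a b : ℝ) :
    |deriv φ a - deriv φ b| ≤ Γ * |a - b| := by
  have h2 : ContDiff ℝ (1 + 1) φ := by
    have e : (1 + 1 : WithTop ℕ∞) = 2 := by norm_num
    rw [e]; exact hφ
  have hφ' : Differentiable ℝ (deriv φ) :=
    ((contDiff_succ_iff_deriv.mp h2).2.2).differentiable one_ne_zero
  have := Convex.norm_image_sub_le_of_norm_deriv_le (f := deriv φ) (s := Set.univ)
    (fun x _ => hφ'.differentiableAt) (fun x _ => by simpa using hd2 x)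
    convex_univ (Set.mem_univ b) (Set.mem_univ a)
  simpa [Real.norm_eq_abs] using this

lemma key_bracket (φ : ℝ → ℝ) (hφ : ContDiff ℝ 2 φ) (Γ : ℝ)
    (hd1 : ∀ z, |deriv φ z| ≤ Γ) (hd2 : ∀ z, |deriv (deriv φ) z| ≤ Γ)
    (A1 A2 B1 B2 : ℝ) :
    |(φ (A2 + B2) - φ A2) - ((φ (A1 + B1)) - φ A1)| ≤
      Γ * |B2 - B1| + Γ * (|A2 - A1| + |B2 - B1|) * |B1| := by
  have hΓ : 0 ≤ Γ := le_trans (abs_nonneg _) (hd1 0)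
  have hφd : Differentiable ℝ φ := hφ.differentiable two_ne_zero
  set g : ℝ → ℝ := fun t => φ (A2 + t * B2) - φ (A1 + t * B1) with hg
  set g' : ℝ → ℝ := fun t => deriv φ (A2 + t * B2) * B2 - deriv φ (A1 + t * B1) * B1 with hg'
  have hder : ∀ t : ℝ, HasDerivAt g (g' t) t := by
    intro t
    have h2 : HasDerivAt (fun t : ℝ => A2 + t * B2) B2 t := by
      simpa using ((hasDerivAt_id t).mul_const B2).const_add A2
    have h1 : HasDerivAt (fun t : ℝ => A1 + t * B1) B1 t := by
      simpa using ((hasDerivAt_id t).mul_const B1).const_add A1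
    exact ((hφd _).hasDerivAt.comp t h2).sub ((hφd _).hasDerivAt.comp t h1)
  obtain ⟨s, hs, hseq⟩ := exists_hasDerivAt_eq_slope g g' zero_lt_one
    (fun t _ => (hder t).continuousAt.continuousWithinAt) (fun t ht => hder t)
  have hval : (φ (A2 + B2) - φ A2) - ((φ (A1 + B1)) - φ A1) = g' s := by
    rw [hseq]
    simp only [hg]
    norm_num
    ring
  rw [hval]
  have hgs : g' s = deriv φ (A2 + s * B2) * (B2 - B1) +
      (deriv φ (A2 + s * B2) - deriv φ (A1 + s * B1)) * B1 := by
    simp only [hg']; ring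
  rw [hgs]
  have h1 : |deriv φ (A2 + s * B2) * (B2 - B1)| ≤ Γ * |B2 - B1| := by
    rw [abs_mul]
    exact mul_le_mul_of_nonneg_right (hd1 _) (abs_nonneg _)
  have h2 : |(deriv φ (A2 + s * B2) - deriv φ (A1 + s * B1)) * B1| ≤
      Γ * (|A2 - A1| + |B2 - B1|) * |B1| := by
    rw [abs_mul]
    apply mul_le_mul_of_nonneg_right _ (abs_nonneg _)
    calc |deriv φ (A2 + s * B2) - deriv φ (A1 + s * B1)| ≤
        Γ * |(A2 + s * B2) - (A1 + s * B1)| := deriv_lip φ hφ Γ hd2 _ _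
      _ ≤ Γ * (|A2 - A1| + |B2 - B1|) := by
          apply mul_le_mul_of_nonneg_left _ hΓ
          have : (A2 + s * B2) - (A1 + s * B1) = (A2 - A1) + s * (B2 - B1) := by ring
          rw [this]
          calc |(A2 - A1) + s * (B2 - B1)| ≤ |A2 - A1| + |s * (B2 - B1)| := abs_add_le _ _
            _ ≤ |A2 - A1| + |B2 - B1| := by
                rw [abs_mul]
                have : |s| ≤ 1 := by
                  rw [abs_of_pos hs.1]; exact le_of_lt hs.2
                nlinarith [abs_nonneg (B2 - B1)]
  calc _ ≤ _ := abs_add_le _ _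
    _ ≤ _ := add_le_add h1 h2

/-- Deterministic perturbation bound on the change of the output
difference at two nearby inputs, for weights near a bounded initialization. -/
theorem output_difference_perturbation
    (c ctil : ℝ) (hc : 0 < c) (hctil : 0 < ctil) :
    ∃ C : ℝ, 0 < C ∧
      ∀ (d k : ℕ) (Γ : ℝ) (φ : ℝ → ℝ) (v : Fin k → ℝ)
        (x1 x2 : Fin d → ℝ) (W0 W : Fin k → Fin d → ℝ),
        ContDiff ℝ 2 φ →
        (∀ z, |deriv φ z| ≤ Γ) → (∀ z, |deriv (deriv φ) z| ≤ Γ) →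
        (∀ ℓ, v ℓ = 1 / Real.sqrt k ∨ v ℓ = -(1 / Real.sqrt k)) →
        l2 x1 = 1 → l2 x2 = 1 →
        c * d ≤ k →
        spec W0 ≤ 2 * (Real.sqrt k + Real.sqrt d) →
        frob (W - W0) ≤ ctil * Real.sqrt k →
        |(nnet φ v W x2 - nnet φ v W0 x2) - (nnet φ v W x1 - nnet φ v W0 x1)| ≤
          C * Γ * l2 (fun j => x2 j - x1 j) * spec (W - W0) := by
  have hsc : 0 < Real.sqrt c := Real.sqrt_pos.mpr hc
  refine ⟨3 + 2 / Real.sqrt c + ctil, by positivity, ?_⟩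
  intro d k Γ φ v x1 x2 W0 W hφ hd1 hd2 hv hx1 hx2 hkd hW0 hWF
  have hΓ : 0 ≤ Γ := le_trans (abs_nonneg _) (hd1 0)
  set Δ : Fin k → Fin d → ℝ := W - W0 with hΔdef
  have hΔ : ∀ ℓ j, Δ ℓ j = W ℓ j - W0 ℓ j := fun ℓ j => rfl
  set E : ℝ := l2 (fun j => x2 j - x1 j) with hEdef
  have hE0 : 0 ≤ E := l2_nonneg _
  have ha0 : 0 ≤ spec Δ := spec_nonneg Δ
  rcases Nat.eq_zero_or_pos k with hk0 | hkpos
  · subst hk0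
    have h1 : nnet φ v W x2 = 0 := by simp [nnet]
    have h2 : nnet φ v W0 x2 = 0 := by simp [nnet]
    have h3 : nnet φ v W x1 = 0 := by simp [nnet]
    have h4 : nnet φ v W0 x1 = 0 := by simp [nnet]
    rw [h1, h2, h3, h4]
    simp only [sub_zero, sub_self, abs_zero]
    exact mul_nonneg (mul_nonneg (mul_nonneg (by positivity) hΓ) hE0) ha0
  have hsk : 0 < Real.sqrt k := Real.sqrt_pos.mpr (by exact_mod_cast hkpos)
  -- vectors
  set D : Fin k → ℝ := fun ℓ => ∑ j, Δ ℓ j * (x2 j - x1 j) with hDdef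
  set P : Fin k → ℝ := fun ℓ => ∑ j, W0 ℓ j * (x2 j - x1 j) with hPdef
  set Q : Fin k → ℝ := fun ℓ => ∑ j, Δ ℓ j * x1 j with hQdef
  set br : Fin k → ℝ := fun ℓ => (φ (∑ j, W ℓ j * x2 j) - φ (∑ j, W0 ℓ j * x2 j)) -
      (φ (∑ j, W ℓ j * x1 j) - φ (∑ j, W0 ℓ j * x1 j)) with hbrdef
  have hDb : l2 D ≤ spec Δ * E := l2_mulvec_le_spec Δ _
  have hPb : l2 P ≤ spec W0 * E := l2_mulvec_le_spec W0 _
  have hQb : l2 Q ≤ spec Δ := by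
    have := l2_mulvec_le_spec Δ x1
    rwa [hx1, mul_one] at this
  -- per-unit bracket bound
  have hbr : ∀ ℓ, |br ℓ| ≤ Γ * |D ℓ| + Γ * (|P ℓ| + |D ℓ|) * |Q ℓ| := by
    intro ℓ
    have hW2 : ∑ j, W ℓ j * x2 j = (∑ j, W0 ℓ j * x2 j) + (∑ j, Δ ℓ j * x2 j) := by
      rw [← Finset.sum_add_distrib]
      exact Finset.sum_congr rfl fun j _ => by rw [hΔ]; ring
    have hW1 : ∑ j, W ℓ j * x1 j = (∑ j, W0 ℓ j * x1 j) + (∑ j, Δ ℓ j * x1 j) := by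
      rw [← Finset.sum_add_distrib]
      exact Finset.sum_congr rfl fun j _ => by rw [hΔ]; ring
    have hDe : (∑ j, Δ ℓ j * x2 j) - (∑ j, Δ ℓ j * x1 j) = D ℓ := by
      rw [hDdef, ← Finset.sum_sub_distrib]
      exact Finset.sum_congr rfl fun j _ => by ring
    have hPe : (∑ j, W0 ℓ j * x2 j) - (∑ j, W0 ℓ j * x1 j) = P ℓ := by
      rw [hPdef, ← Finset.sum_sub_distrib]
      exact Finset.sum_congr rfl fun j _ => by ring
    have hQe : (∑ j, Δ ℓ j * x1 j) = Q ℓ := rfl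
    have hk := key_bracket φ hφ Γ hd1 hd2 (∑ j, W0 ℓ j * x1 j) (∑ j, W0 ℓ j * x2 j)
      (∑ j, Δ ℓ j * x1 j) (∑ j, Δ ℓ j * x2 j)
    rw [hDe, hPe, hQe] at hk
    have hbrval : br ℓ = (φ ((∑ j, W0 ℓ j * x2 j) + (∑ j, Δ ℓ j * x2 j)) - φ (∑ j, W0 ℓ j * x2 j)) -
        ((φ ((∑ j, W0 ℓ j * x1 j) + (∑ j, Δ ℓ j * x1 j))) - φ (∑ j, W0 ℓ j * x1 j)) := by
      rw [hbrdef]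
      simp only [hW1, hW2]
    rw [hbrval]
    exact hk
  -- sum identity
  have hLHS : (nnet φ v W x2 - nnet φ v W0 x2) - (nnet φ v W x1 - nnet φ v W0 x1)
      = ∑ ℓ, v ℓ * br ℓ := by
    simp only [nnet, hbrdef, ← Finset.sum_sub_distrib]
    exact Finset.sum_congr rfl fun ℓ _ => by ring
  have hvabs : ∀ ℓ, |v ℓ| = 1 / Real.sqrt k := by
    intro ℓ
    rcases hv ℓ with h | h
    · rw [h]; exact abs_of_pos (by positivity)
    · rw [h, abs_neg]; exact abs_of_pos (by positivity)
  -- sums bounds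
  have hones : l2 (fun _ : Fin k => (1:ℝ)) = Real.sqrt k := by
    simp [l2]
  have hsum1 : ∑ ℓ, |D ℓ| ≤ Real.sqrt k * l2 D := by
    have h := l2_cauchy D (fun _ : Fin k => (1:ℝ))
    rw [hones] at h
    calc ∑ ℓ, |D ℓ| = ∑ ℓ, |D ℓ| * |(1:ℝ)| := by simp
      _ ≤ l2 D * Real.sqrt k := h
      _ = Real.sqrt k * l2 D := mul_comm _ _
  have hPQ : ∑ ℓ, |P ℓ| * |Q ℓ| ≤ l2 P * l2 Q := l2_cauchy P Q
  have hDQ : ∑ ℓ, |D ℓ| * |Q ℓ| ≤ l2 D * l2 Q := l2_cauchy D Q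
  -- main chain
  have hchain : |(nnet φ v W x2 - nnet φ v W0 x2) - (nnet φ v W x1 - nnet φ v W0 x1)| ≤
      (1 / Real.sqrt k) * ∑ ℓ, (Γ * |D ℓ| + Γ * (|P ℓ| + |D ℓ|) * |Q ℓ|) := by
    rw [hLHS]
    calc |∑ ℓ, v ℓ * br ℓ| ≤ ∑ ℓ, |v ℓ * br ℓ| := Finset.abs_sum_le_sum_abs _ _
      _ = ∑ ℓ, (1 / Real.sqrt k) * |br ℓ| := by
          refine Finset.sum_congr rfl fun ℓ _ => ?_
          rw [abs_mul, hvabs]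
      _ ≤ ∑ ℓ, (1 / Real.sqrt k) * (Γ * |D ℓ| + Γ * (|P ℓ| + |D ℓ|) * |Q ℓ|) :=
          Finset.sum_le_sum fun ℓ _ => mul_le_mul_of_nonneg_left (hbr ℓ) (by positivity)
      _ = (1 / Real.sqrt k) * ∑ ℓ, (Γ * |D ℓ| + Γ * (|P ℓ| + |D ℓ|) * |Q ℓ|) :=
          (Finset.mul_sum _ _ _).symm
  have hsplit : ∑ ℓ, (Γ * |D ℓ| + Γ * (|P ℓ| + |D ℓ|) * |Q ℓ|) =
      Γ * (∑ ℓ, |D ℓ|) + Γ * (∑ ℓ, |P ℓ| * |Q ℓ|) + Γ * (∑ ℓ, |D ℓ| * |Q ℓ|) := by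
    rw [Finset.mul_sum, Finset.mul_sum, Finset.mul_sum, ← Finset.sum_add_distrib,
      ← Finset.sum_add_distrib]
    exact Finset.sum_congr rfl fun ℓ _ => by ring
  rw [hsplit] at hchain
  -- scalar facts
  have hfr : spec Δ ≤ ctil * Real.sqrt k := le_trans (spec_le_frob Δ) hWF
  have hdk : Real.sqrt d ≤ Real.sqrt k / Real.sqrt c := by
    rw [le_div_iff₀ hsc]
    calc Real.sqrt d * Real.sqrt c = Real.sqrt (c * d) := by
          rw [Real.sqrt_mul hc.le, mul_comm]
      _ ≤ Real.sqrt k := Real.sqrt_le_sqrt hkd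
  have hw : spec W0 ≤ 2 * Real.sqrt k + 2 * (Real.sqrt k / Real.sqrt c) := by
    calc spec W0 ≤ 2 * (Real.sqrt k + Real.sqrt d) := hW0
      _ ≤ 2 * Real.sqrt k + 2 * (Real.sqrt k / Real.sqrt c) := by linarith
  have hQ0 : 0 ≤ l2 Q := l2_nonneg Q
  refine le_trans hchain ?_
  have hS1 : ∑ ℓ, |D ℓ| ≤ Real.sqrt k * (spec Δ * E) :=
    le_trans hsum1 (mul_le_mul_of_nonneg_left hDb hsk.le)
  have hS2 : ∑ ℓ, |P ℓ| * |Q ℓ| ≤ (spec W0 * E) * spec Δ :=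
    le_trans hPQ (mul_le_mul hPb hQb hQ0 (mul_nonneg (spec_nonneg W0) hE0))
  have hS3 : ∑ ℓ, |D ℓ| * |Q ℓ| ≤ (spec Δ * E) * spec Δ :=
    le_trans hDQ (mul_le_mul hDb hQb hQ0 (mul_nonneg ha0 hE0))
  have hsumall : Γ * (∑ ℓ, |D ℓ|) + Γ * (∑ ℓ, |P ℓ| * |Q ℓ|) + Γ * (∑ ℓ, |D ℓ| * |Q ℓ|) ≤
      Γ * (Real.sqrt k * (spec Δ * E) + (spec W0 * E) * spec Δ + (spec Δ * E) * spec Δ) := by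
    have h := add_le_add (add_le_add hS1 hS2) hS3
    calc Γ * (∑ ℓ, |D ℓ|) + Γ * (∑ ℓ, |P ℓ| * |Q ℓ|) + Γ * (∑ ℓ, |D ℓ| * |Q ℓ|)
        = Γ * ((∑ ℓ, |D ℓ|) + (∑ ℓ, |P ℓ| * |Q ℓ|) + (∑ ℓ, |D ℓ| * |Q ℓ|)) := by ring
      _ ≤ Γ * (Real.sqrt k * (spec Δ * E) + (spec W0 * E) * spec Δ + (spec Δ * E) * spec Δ) :=
          mul_le_mul_of_nonneg_left h hΓ
  calc (1 / Real.sqrt k) * (Γ * (∑ ℓ, |D ℓ|) + Γ * (∑ ℓ, |P ℓ| * |Q ℓ|) + Γ * (∑ ℓ, |D ℓ| * |Q ℓ|))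
      ≤ (1 / Real.sqrt k) * (Γ * (Real.sqrt k * (spec Δ * E) + (spec W0 * E) * spec Δ + (spec Δ * E) * spec Δ)) :=
        mul_le_mul_of_nonneg_left hsumall (by positivity)
    _ ≤ (3 + 2 / Real.sqrt c + ctil) * Γ * E * spec Δ := by
        rw [one_div, inv_mul_le_iff₀ hsk]
        have t2 : Γ * ((spec W0 * E) * spec Δ) ≤
            Γ * ((2 * Real.sqrt k + 2 * (Real.sqrt k / Real.sqrt c)) * (E * spec Δ)) := by
          apply mul_le_mul_of_nonneg_left _ hΓ
          calc (spec W0 * E) * spec Δ = spec W0 * (E * spec Δ) := by ring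
            _ ≤ (2 * Real.sqrt k + 2 * (Real.sqrt k / Real.sqrt c)) * (E * spec Δ) :=
                mul_le_mul_of_nonneg_right hw (mul_nonneg hE0 ha0)
        have t3 : Γ * ((spec Δ * E) * spec Δ) ≤
            Γ * ((ctil * Real.sqrt k) * (E * spec Δ)) := by
          apply mul_le_mul_of_nonneg_left _ hΓ
          calc (spec Δ * E) * spec Δ = spec Δ * (E * spec Δ) := by ring
            _ ≤ (ctil * Real.sqrt k) * (E * spec Δ) :=
                mul_le_mul_of_nonneg_right hfr (mul_nonneg hE0 ha0)
        have expand : Real.sqrt k * ((3 + 2 / Real.sqrt c + ctil) * Γ * E * spec Δ) =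
            Γ * (Real.sqrt k * (spec Δ * E)) +
            Γ * ((2 * Real.sqrt k + 2 * (Real.sqrt k / Real.sqrt c)) * (E * spec Δ)) +
            Γ * ((ctil * Real.sqrt k) * (E * spec Δ)) := by
          field_simp
          ring
        rw [expand]
        have lhsexpand : Γ * (Real.sqrt k * (spec Δ * E) + (spec W0 * E) * spec Δ + (spec Δ * E) * spec Δ) =
            Γ * (Real.sqrt k * (spec Δ * E)) + Γ * ((spec W0 * E) * spec Δ) + Γ * ((spec Δ * E) * spec Δ) := by
          ring
        rw [lhsexpand]
        exact add_le_add (add_le_add le_rfl t2) t3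
end
end
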